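/- In the field ℚ(r,m) of rational functions in two variables, setting s = −r(8mr+36r−2m−1)/(27r+m²) and z = r(108r²−4m²r−36mr−27r+m²+m)/(27r+m²), the identity z² = −r(27s²+36rs−s−16r³+8r²−r) holds. -/

import Mathlib

/-- In `ℚ(r,m)`, with `s = −r(8mr+36r−2m−1)/(27r+m²)` and
`z = r(108r²−4m²r−36mr−27r+m²+m)/(27r+m²)`, the identity
`z² = −r(27s²+36rs−s−16r³+8r²−r)` holds (rational parametrization of `Y₋(4)`). -/
theorem Y4_parametrization :
    let K := FractionRing (MvPolynomial (Fin 2) ℚ)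
    let r : K := algebraMap (MvPolynomial (Fin 2) ℚ) K (MvPolynomial.X 0)
    let m : K := algebraMap (MvPolynomial (Fin 2) ℚ) K (MvPolynomial.X 1)
    let s : K := -r * (8*m*r + 36*r - 2*m - 1) / (27*r + m^2)
    let z : K := r * (108*r^2 - 4*m^2*r - 36*m*r - 27*r + m^2 + m) / (27*r + m^2)
    z^2 = -r * (27*s^2 + 36*r*s - s - 16*r^3 + 8*r^2 - r) := by
  intro K r m s z
  have hd : (27*r + m^2 : K) ≠ 0 := by
    have : (27*r + m^2 : K) =
        algebraMap (MvPolynomial (Fin 2) ℚ) K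
          (27 * MvPolynomial.X 0 + (MvPolynomial.X 1)^2) := by
      simp [r, m, map_add, map_mul, map_pow, map_ofNat]
    rw [this]
    intro h
    have h0 : (27 * MvPolynomial.X 0 + (MvPolynomial.X 1)^2 : MvPolynomial (Fin 2) ℚ) = 0 := by
      exact (map_eq_zero_iff _ (IsFractionRing.injective _ _)).mp h
    have := congrArg (MvPolynomial.eval fun _ => (1:ℚ)) h0
    norm_num at this
  simp only [s, z]
  have hd' : (r*27 + m^2 : K) ≠ 0 := by rwa [mul_comm] at hd
  field_simp
  ring
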